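/- Let k ≥ 2 and R ≥ 1 be integers and let D_0, D_1 be distributions on {0,1}^k with Pr_{x ~ D_0}[every coordinate of x is 0] ≥ 1 − 2/√k and Pr_{x ~ D_1}[every coordinate of x is 0] ≤ 1/√k. Consider the dictatorship-test distribution on (y,b) determined by D_0, D_1, R, and noise rate 1/k². Then for every j ∈ [R], the disjunction h(y) = y_1^{(j)} ∨ y_2^{(j)} ∨ … ∨ y_k^{(j)} satisfies Pr[h(y) = b] ≥ 1 − 3/√k. -/

import Mathlib

open MeasureTheory
open scoped ENNReal

noncomputable section

/-- The real value (0 or 1) of a bit. -/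
def bval (b : Bool) : ℝ := if b then 1 else 0

/-- The distribution of a biased coin on `Bool` with probability `p` of `true`. -/
def coin (p : ℝ) : Measure Bool :=
  (PMF.bernoulli (min (Real.toNNReal p) 1) (min_le_right _ _)).toMeasure

/-- The `γ`-noisy version of a distribution `μ` on the hypercube. -/
def noisy {ι : Type*} [Fintype ι] (γ : ℝ) (μ : Measure (ι → Bool)) :
    Measure (ι → Bool) :=
  Measure.map
    (fun p : (ι → Bool) × ((ι → Bool) × (ι → Bool)) => fun i =>
      if p.2.1 i then p.2.2 i else p.1 i)
    (μ.prod ((Measure.pi fun _ : ι => coin γ).prod (Measure.pi fun _ : ι => coin (1 / 2))))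

/-- The distribution on `{0,1}^{k×R}` whose `R` columns are i.i.d. from `D`; the entry in
row `i` and column `j` is indexed by `(i, j) : Fin k × Fin R`. -/
def colProd {k : ℕ} (D : Measure (Fin k → Bool)) (R : ℕ) :
    Measure (Fin k × Fin R → Bool) :=
  Measure.map (fun x (p : Fin k × Fin R) => x p.2 p.1) (Measure.pi fun _ : Fin R => D)

/-- The dictatorship-test distribution on labeled examples `(y, b)`: pick `b` uniformly from
`{0,1}`, sample the columns of `x` i.i.d. from `D_b`, and apply per-entry noise `γ`. -/
def dictTest {k : ℕ} (D₀ D₁ : Measure (Fin k → Bool)) (R : ℕ) (γ : ℝ) :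
    Measure ((Fin k × Fin R → Bool) × Bool) :=
  (1 / 2 : ℝ≥0∞) • Measure.map (fun y => (y, false)) (noisy γ (colProd D₀ R)) +
    (1 / 2 : ℝ≥0∞) • Measure.map (fun y => (y, true)) (noisy γ (colProd D₁ R))

section Aux
open Set

instance (p : ℝ) : IsProbabilityMeasure (coin p) := by unfold coin; infer_instance

lemma coin_true {p : ℝ} (h1 : p ≤ 1) : coin p {true} = ENNReal.ofReal p := by
  rw [coin, PMF.toMeasure_apply_singleton _ _ .of_discrete]
  simp [PMF.bernoulli_apply, min_eq_left (Real.toNNReal_le_one.2 h1), ENNReal.ofReal]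

lemma coin_false {p : ℝ} (h1 : p ≤ 1) : coin p {false} = 1 - ENNReal.ofReal p := by
  rw [coin, PMF.toMeasure_apply_singleton _ _ .of_discrete]
  simp [PMF.bernoulli_apply, min_eq_left (Real.toNNReal_le_one.2 h1), ENNReal.ofReal]

lemma pi_eval_preimage {ι X : Type*} [Fintype ι] [MeasurableSpace X]
    (μ : ι → Measure X) [∀ i, IsProbabilityMeasure (μ i)] (l : ι) (B : Set X) :
    Measure.pi μ ((fun f => f l) ⁻¹' B) = μ l B := by
  classical
  have h : ((fun f : ι → X => f l) ⁻¹' B)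
      = Set.pi Set.univ (fun m => if m = l then B else Set.univ) := by
    ext f
    simp only [Set.mem_preimage, Set.mem_pi, Set.mem_univ, forall_true_left]
    constructor
    · intro hf m; split <;> simp_all
    · intro hf; have := hf l; simpa using this
  rw [h, Measure.pi_pi]
  rw [Finset.prod_eq_single l (fun m _ hm => by simp [hm]) (by simp)]
  simp

instance {k R : ℕ} (D : Measure (Fin k → Bool)) [IsProbabilityMeasure D] :
    IsProbabilityMeasure (colProd D R) :=
  Measure.isProbabilityMeasure_map (measurable_of_finite _).aemeasurable

instance {ι : Type*} [Fintype ι] (γ : ℝ) (μ : Measure (ι → Bool)) [IsProbabilityMeasure μ] :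
    IsProbabilityMeasure (noisy γ μ) :=
  Measure.isProbabilityMeasure_map (measurable_of_finite _).aemeasurable

lemma noisy_apply {ι : Type*} [Fintype ι] (γ : ℝ) (μ : Measure (ι → Bool)) [SFinite μ]
    (T : Set (ι → Bool)) :
    noisy γ μ T = ∫⁻ y, ((Measure.pi fun _ : ι => coin γ).prod
        (Measure.pi fun _ : ι => coin (1 / 2)))
      {su | (fun i => if su.1 i then su.2 i else y i) ∈ T} ∂μ := by
  rw [noisy, Measure.map_apply (measurable_of_finite _) .of_discrete,
    Measure.prod_apply .of_discrete]
  rfl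

lemma colProd_col {k R : ℕ} (D : Measure (Fin k → Bool)) [IsProbabilityMeasure D] (j : Fin R) :
    colProd D R {y | ∀ i, y (i, j) = false} = D {x | ∀ i, x i = false} := by
  rw [colProd, Measure.map_apply (measurable_of_finite _) .of_discrete]
  have h : ((fun x (p : Fin k × Fin R) => x p.2 p.1) ⁻¹' {y | ∀ i, y (i, j) = false})
      = (fun f : Fin R → (Fin k → Bool) => f j) ⁻¹' {x | ∀ i, x i = false} := rfl
  rw [h, pi_eval_preimage]

lemma rect_measure {k R : ℕ} {γ : ℝ} (hγ0 : 0 ≤ γ) (hγ1 : γ ≤ 1) (l : Fin k × Fin R) (b : Bool) :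
    ((Measure.pi fun _ : Fin k × Fin R => coin γ).prod
        (Measure.pi fun _ : Fin k × Fin R => coin (1 / 2)))
      ({s | s l = true} ×ˢ {u | u l = b}) = ENNReal.ofReal (γ / 2) := by
  rw [Measure.prod_prod]
  have h1 : ({s : Fin k × Fin R → Bool | s l = true})
      = (fun f => f l) ⁻¹' ({true} : Set Bool) := rfl
  have h2 : ({u : Fin k × Fin R → Bool | u l = b})
      = (fun f => f l) ⁻¹' ({b} : Set Bool) := rfl
  rw [h1, h2, pi_eval_preimage, pi_eval_preimage, coin_true hγ1]
  have hhalf : coin (1/2) {b} = ENNReal.ofReal (1/2) := by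
    cases b
    · rw [coin_false (by norm_num)]
      rw [ENNReal.ofReal_div_of_pos (by norm_num)]
      simp only [ENNReal.ofReal_one, ENNReal.ofReal_ofNat]
      rw [ENNReal.sub_eq_of_eq_add (by simp)]
      rw [ENNReal.div_add_div_same, one_add_one_eq_two]
      exact (ENNReal.div_self (two_ne_zero) (ENNReal.ofNat_ne_top)).symm
    · exact coin_true (by norm_num)
  rw [hhalf, ← ENNReal.ofReal_mul hγ0, mul_one_div]

lemma noisy_col_ge {k R : ℕ} {γ : ℝ} (hγ0 : 0 ≤ γ) (hγ1 : γ ≤ 1)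
    (D : Measure (Fin k → Bool)) [IsProbabilityMeasure D] (j : Fin R) :
    (1 - ENNReal.ofReal (k * (γ / 2))) * D {x | ∀ i, x i = false}
      ≤ noisy γ (colProd D R) {y | ∀ i, y (i, j) = false} := by
  rw [noisy_apply, ← colProd_col D j]
  set ρ := (Measure.pi fun _ : Fin k × Fin R => coin γ).prod
      (Measure.pi fun _ : Fin k × Fin R => coin (1/2)) with hρ
  set C : Set (Fin k × Fin R → Bool) := {y | ∀ i, y (i, j) = false} with hC
  have key : ∀ y ∈ C, (1 - ENNReal.ofReal (↑k * (γ/2)))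
      ≤ ρ {su | (fun i => if su.1 i then su.2 i else y i) ∈ C} := by
    intro y hy
    set N : Set ((Fin k × Fin R → Bool) × (Fin k × Fin R → Bool)) :=
      {su | (fun i => if su.1 i then su.2 i else y i) ∈ C} with hN
    have hsub : Nᶜ ⊆ ⋃ i : Fin k, ({s | s (i,j) = true} ×ˢ {u | u (i,j) = true}) := by
      intro su hsu
      simp only [mem_compl_iff, hN, mem_setOf_eq, hC, not_forall] at hsu
      obtain ⟨i, hi⟩ := hsu
      rw [Bool.not_eq_false] at hi
      refine mem_iUnion.2 ⟨i, ?_⟩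
      by_cases h : su.1 (i, j) = true
      · exact ⟨h, by simpa [h] using hi⟩
      · exfalso
        simp only [Bool.not_eq_true] at h
        have := hy i
        simp [h, this] at hi
    have hNc : ρ Nᶜ ≤ ENNReal.ofReal (↑k * (γ/2)) := by
      refine le_trans (measure_mono hsub) (le_trans (measure_iUnion_le _) ?_)
      have heq : ∀ i : Fin k,
          ρ ({s | s (i,j) = true} ×ˢ {u | u (i,j) = true}) = ENNReal.ofReal (γ/2) :=
        fun i => rect_measure hγ0 hγ1 (i,j) true
      simp only [heq]
      rw [tsum_fintype]
      simp only [Finset.sum_const, Finset.card_univ, Fintype.card_fin, nsmul_eq_mul]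
      rw [← ENNReal.ofReal_natCast k, ← ENNReal.ofReal_mul (Nat.cast_nonneg k)]
    have hNm := prob_compl_eq_one_sub (μ := ρ) (s := Nᶜ) .of_discrete
    rw [compl_compl] at hNm
    calc (1 : ℝ≥0∞) - ENNReal.ofReal (↑k * (γ/2)) ≤ 1 - ρ Nᶜ := tsub_le_tsub_left hNc 1
      _ = ρ N := hNm.symm
  calc (1 - ENNReal.ofReal (↑k * (γ/2))) * colProd D R C
      = ∫⁻ y, C.indicator (fun _ => 1 - ENNReal.ofReal (↑k * (γ/2))) y ∂(colProd D R) := by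
        rw [lintegral_indicator_const .of_discrete]
    _ ≤ _ := by
        refine lintegral_mono fun y => ?_
        by_cases hy : y ∈ C
        · rw [indicator_of_mem hy]; exact key y hy
        · rw [indicator_of_notMem hy]; exact zero_le

lemma noisy_col_le {k R : ℕ} {γ : ℝ} (hγ0 : 0 ≤ γ) (hγ1 : γ ≤ 1)
    (D : Measure (Fin k → Bool)) [IsProbabilityMeasure D] (j : Fin R) :
    noisy γ (colProd D R) {y | ∀ i, y (i, j) = false}
      ≤ D {x | ∀ i, x i = false} + ENNReal.ofReal (γ / 2) := by
  rw [noisy_apply, ← colProd_col D j]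
  set ρ := (Measure.pi fun _ : Fin k × Fin R => coin γ).prod
      (Measure.pi fun _ : Fin k × Fin R => coin (1/2)) with hρ
  set C : Set (Fin k × Fin R → Bool) := {y | ∀ i, y (i, j) = false} with hC
  have key : ∀ y, ρ {su | (fun i => if su.1 i then su.2 i else y i) ∈ C}
      ≤ C.indicator (fun _ => (1:ℝ≥0∞)) y + ENNReal.ofReal (γ/2) := by
    intro y
    by_cases hy : y ∈ C
    · rw [indicator_of_mem hy]
      exact le_add_right prob_le_one
    · rw [indicator_of_notMem hy, zero_add]
      simp only [hC, mem_setOf_eq, not_forall] at hy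
      obtain ⟨i, hi⟩ := hy
      rw [Bool.not_eq_false] at hi
      refine le_trans (measure_mono ?_) (le_of_eq (rect_measure hγ0 hγ1 (i,j) false))
      intro su hsu
      have hmem : (if su.1 (i,j) then su.2 (i,j) else y (i,j)) = false := hsu i
      by_cases h : su.1 (i,j) = true
      · exact ⟨h, by simpa [h] using hmem⟩
      · exfalso
        simp only [Bool.not_eq_true] at h
        simp [h, hi] at hmem
  calc ∫⁻ y, ρ {su | (fun i => if su.1 i then su.2 i else y i) ∈ C} ∂(colProd D R)
      ≤ ∫⁻ y, (C.indicator (fun _ => (1:ℝ≥0∞)) y + ENNReal.ofReal (γ/2)) ∂(colProd D R) :=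
        lintegral_mono key
    _ = colProd D R C + ENNReal.ofReal (γ/2) := by
        rw [lintegral_add_right _ measurable_const, lintegral_indicator_const .of_discrete,
          lintegral_const, measure_univ, mul_one, one_mul]

end Aux
open Set

/-- completeness of the dictatorship test: every column disjunction
`h(y) = ⋁_{i ∈ [k]} y_i^{(j)}` agrees with the label with probability at least `1 - 3/√k`. -/
theorem stmt_9 (k R : ℕ) (hk : 2 ≤ k) (hR : 1 ≤ R)
    (D₀ D₁ : Measure (Fin k → Bool)) [IsProbabilityMeasure D₀] [IsProbabilityMeasure D₁]
    (h0 : 1 - 2 / Real.sqrt k ≤ (D₀ {x | ∀ i, x i = false}).toReal)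
    (h1 : (D₁ {x | ∀ i, x i = false}).toReal ≤ 1 / Real.sqrt k)
    (j : Fin R) :
    1 - 3 / Real.sqrt k ≤
      ((dictTest D₀ D₁ R (1 / (k : ℝ) ^ 2))
        {p | ((∃ i : Fin k, p.1 (i, j) = true) ↔ p.2 = true)}).toReal := by
  have hkR : (2 : ℝ) ≤ (k : ℝ) := by exact_mod_cast hk
  have hk0 : (0 : ℝ) < (k : ℝ) := by linarith
  set γ : ℝ := 1 / (k : ℝ) ^ 2 with hγ
  have hγ0 : 0 ≤ γ := by positivity
  have hγ1 : γ ≤ 1 := by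
    rw [hγ, div_le_one (by positivity)]
    nlinarith
  set C : Set (Fin k × Fin R → Bool) := {y | ∀ i, y (i, j) = false} with hC
  set S : Set ((Fin k × Fin R → Bool) × Bool) :=
    {p | ((∃ i : Fin k, p.1 (i, j) = true) ↔ p.2 = true)} with hS
  have hpre0 : ((fun y : Fin k × Fin R → Bool => (y, false)) ⁻¹' S) = C := by
    ext y
    simp only [hS, mem_preimage, mem_setOf_eq, hC, Bool.false_eq_true, iff_false, not_exists,
      Bool.not_eq_true]
  have hpre1 : ((fun y : Fin k × Fin R → Bool => (y, true)) ⁻¹' S) = Cᶜ := by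
    ext y
    simp only [hS, mem_preimage, mem_setOf_eq, hC, iff_true, mem_compl_iff, not_forall,
      Bool.not_eq_false]
  have hval : (dictTest D₀ D₁ R γ) S
      = (1/2 : ℝ≥0∞) * noisy γ (colProd D₀ R) C
        + (1/2 : ℝ≥0∞) * (1 - noisy γ (colProd D₁ R) C) := by
    rw [dictTest, Measure.add_apply, Measure.smul_apply, Measure.smul_apply, smul_eq_mul,
      smul_eq_mul, Measure.map_apply (measurable_of_finite _) .of_discrete,
      Measure.map_apply (measurable_of_finite _) .of_discrete, hpre0, hpre1,
      prob_compl_eq_one_sub .of_discrete]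
  set ν₀ := noisy γ (colProd D₀ R) with hν₀
  set ν₁ := noisy γ (colProd D₁ R) with hν₁
  have hfin0 : ν₀ C ≠ ⊤ := measure_ne_top _ _
  have hfin1 : ν₁ C ≠ ⊤ := measure_ne_top _ _
  set A := (ν₀ C).toReal with hA'
  set B := (ν₁ C).toReal with hB'
  set q₀ := (D₀ {x | ∀ i, x i = false}).toReal
  set q₁ := (D₁ {x | ∀ i, x i = false}).toReal
  have htr : ((dictTest D₀ D₁ R γ) S).toReal = (1/2) * A + (1/2) * (1 - B) := by
    rw [hval, ENNReal.toReal_add (ENNReal.mul_ne_top (by norm_num) hfin0)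
        (ENNReal.mul_ne_top (by norm_num) (ne_top_of_le_ne_top ENNReal.one_ne_top tsub_le_self)),
      ENNReal.toReal_mul, ENNReal.toReal_mul,
      ENNReal.toReal_sub_of_le prob_le_one ENNReal.one_ne_top]
    norm_num
    rfl
  have hrval : (k:ℝ) * (γ/2) = 1 / (2 * (k:ℝ)) := by
    rw [hγ]; field_simp
  have hr0 : (0:ℝ) ≤ (k:ℝ) * (γ/2) := by positivity
  have hr1 : (k:ℝ) * (γ/2) ≤ 1 := by
    rw [hrval, div_le_one (by linarith)]; linarith
  have hAlow : (1 - 1/(2*(k:ℝ))) * q₀ ≤ A := by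
    have h := noisy_col_ge hγ0 hγ1 D₀ j
    have h2 := ENNReal.toReal_mono hfin0 h
    rw [ENNReal.toReal_mul, ENNReal.toReal_sub_of_le (ENNReal.ofReal_le_one.2 hr1) ENNReal.one_ne_top,
      ENNReal.toReal_ofReal hr0, ENNReal.toReal_one, hrval] at h2
    exact h2
  have hBhigh : B ≤ q₁ + γ/2 := by
    have h := noisy_col_le hγ0 hγ1 D₁ j
    have h2 := ENNReal.toReal_mono
      (ENNReal.add_ne_top.2 ⟨measure_ne_top _ _, ENNReal.ofReal_ne_top⟩) h
    rw [ENNReal.toReal_add (measure_ne_top _ _) ENNReal.ofReal_ne_top,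
      ENNReal.toReal_ofReal (by positivity)] at h2
    exact h2
  rw [htr]
  set s := Real.sqrt k with hs
  have hs2 : s^2 = (k:ℝ) := Real.sq_sqrt hk0.le
  have hs1 : 1 ≤ s := by
    rw [hs, show (1:ℝ) = Real.sqrt 1 by simp]
    exact Real.sqrt_le_sqrt (by linarith)
  have hs0 : (0:ℝ) < s := by linarith
  have hsk : s ≤ (k:ℝ) := by nlinarith
  have f1 : 1/(2*(k:ℝ)) ≤ 1/(2*s) :=
    one_div_le_one_div_of_le (by linarith) (by linarith)
  have f2 : γ/2 ≤ 1/(2*s) := by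
    rw [hγ, div_div]
    exact one_div_le_one_div_of_le (by linarith) (by nlinarith)
  have f3 : 1 - 2/s ≤ 1 := by
    have : (0:ℝ) ≤ 2/s := by positivity
    linarith
  have hnn : (0:ℝ) ≤ 1 - 1/(2*(k:ℝ)) := by
    have : 1/(2*(k:ℝ)) ≤ 1 := by
      rw [div_le_one (by linarith)]; linarith
    linarith
  have hA2 : (1 - 1/(2*(k:ℝ))) * (1 - 2/s) ≤ A :=
    le_trans (mul_le_mul_of_nonneg_left h0 hnn) hAlow
  have hprod : 1/(2*(k:ℝ)) * (1 - 2/s) ≤ 1/(2*s) :=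
    le_trans (mul_le_of_le_one_right (by positivity) f3) f1
  have hexp : (1 - 1/(2*(k:ℝ))) * (1 - 2/s) = (1 - 2/s) - 1/(2*(k:ℝ)) * (1 - 2/s) := by
    ring
  have hinv : (0:ℝ) ≤ 1/s := by positivity
  rw [hexp] at hA2
  have e1 : 1/(2*s) = (1/2)*(1/s) := by ring
  have e2 : 2/s = 2*(1/s) := by ring
  have e3 : 3/s = 3*(1/s) := by ring
  rw [e2] at hA2
  rw [e1] at hprod f2
  rw [e2] at hprod
  linarith [hA2, hprod, hBhigh, h1, f2, hinv]
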